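/- Let θ be an irrational number in (0,1) with continued fraction expansion [0; a_1, a_2, ...] and convergents p_n/q_n. Then for any non-negative integer n and any integer r with 1 ≤ r ≤ q_{n+1} - 1, one has ⌊(q_n + r)θ⌋ = p_n + ⌊rθ⌋. -/

import Mathlib

/-- The Gauss-map iterates of `θ`: `cfTheta θ 0 = θ` and
`cfTheta θ (n+1) = {1 / cfTheta θ n}` (fractional part), so that
`θ = [0; a₁, a₂, ...]` with `aₙ = ⌊1 / cfTheta θ (n-1)⌋`. -/
noncomputable def cfTheta (θ : ℝ) : ℕ → ℝ
  | 0 => θ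
  | n + 1 => Int.fract (1 / cfTheta θ n)

/-- The `n`-th partial quotient `aₙ` (for `n ≥ 1`) of the continued fraction
expansion `θ = [0; a₁, a₂, ...]` of `θ ∈ (0,1)`. -/
noncomputable def cfA (θ : ℝ) (n : ℕ) : ℤ := ⌊1 / cfTheta θ (n - 1)⌋

/-- Numerators `pₙ` of the convergents of `θ = [0; a₁, a₂, ...]`:
`p₋₁ = 1`, `p₀ = 0`, `p_{n+1} = a_{n+1} pₙ + p_{n-1}`. -/
noncomputable def cfP (θ : ℝ) : ℕ → ℤ
  | 0 => 0
  | 1 => 1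
  | n + 2 => cfA θ (n + 2) * cfP θ (n + 1) + cfP θ n

/-- Denominators `qₙ` of the convergents of `θ = [0; a₁, a₂, ...]`:
`q₋₁ = 0`, `q₀ = 1`, `q_{n+1} = a_{n+1} qₙ + q_{n-1}`. -/
noncomputable def cfQ (θ : ℝ) : ℕ → ℤ
  | 0 => 1
  | 1 => cfA θ 1
  | n + 2 => cfA θ (n + 2) * cfQ θ (n + 1) + cfQ θ n

section aux
variable {θ : ℝ}

lemma cfTheta_prop (hθ : Irrational θ) (h01 : θ ∈ Set.Ioo (0:ℝ) 1) :
    ∀ n, Irrational (cfTheta θ n) ∧ cfTheta θ n ∈ Set.Ioo (0:ℝ) 1 := by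
  intro n
  induction n with
  | zero => exact ⟨hθ, h01⟩
  | succ m ih =>
    obtain ⟨hirr, h0, h1⟩ := ih
    have hinv : Irrational (1 / cfTheta θ m) := by
      simpa [one_div] using hirr.inv
    have hirr' : Irrational (cfTheta θ (m+1)) := by
      show Irrational (Int.fract (1 / cfTheta θ m))
      rw [Int.fract]
      exact hinv.sub_intCast _
    refine ⟨hirr', ?_, ?_⟩
    · have := Int.fract_nonneg (1 / cfTheta θ m)
      have hne : cfTheta θ (m+1) ≠ 0 := hirr'.ne_zero
      show (0:ℝ) < Int.fract (1 / cfTheta θ m)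
      rcases lt_or_eq_of_le this with h | h
      · exact h
      · exact absurd h.symm (by exact hne)
    · exact Int.fract_lt_one _

lemma cfTheta_succ_eq (n : ℕ) :
    cfTheta θ (n+1) = 1 / cfTheta θ n - cfA θ (n+1) := by
  show Int.fract (1 / cfTheta θ n) = _
  rw [Int.fract]
  simp [cfA]

lemma cfA_one_le (hθ : Irrational θ) (h01 : θ ∈ Set.Ioo (0:ℝ) 1) (n : ℕ) :
    1 ≤ cfA θ (n+1) := by
  obtain ⟨-, h0, h1⟩ := cfTheta_prop hθ h01 n
  have : (1:ℝ) ≤ 1 / cfTheta θ n := by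
    rw [le_div_iff₀ h0]; linarith
  have : (1:ℤ) ≤ ⌊1 / cfTheta θ n⌋ := by
    exact_mod_cast Int.le_floor.2 (by exact_mod_cast this)
  simpa [cfA] using this

lemma cfQ_one_le (hθ : Irrational θ) (h01 : θ ∈ Set.Ioo (0:ℝ) 1) :
    ∀ n, 1 ≤ cfQ θ n := by
  have key : ∀ n, 1 ≤ cfQ θ n ∧ 1 ≤ cfQ θ (n+1) := by
    intro n
    induction n with
    | zero => exact ⟨le_refl _, by simpa [cfQ] using cfA_one_le hθ h01 0⟩
    | succ m ih =>
      obtain ⟨h1, h2⟩ := ih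
      refine ⟨h2, ?_⟩
      show 1 ≤ cfA θ (m+2) * cfQ θ (m+1) + cfQ θ m
      have ha := cfA_one_le hθ h01 (m+1)
      nlinarith
  exact fun n => (key n).1

lemma cfDet (n : ℕ) :
    cfP θ (n+1) * cfQ θ n - cfP θ n * cfQ θ (n+1) = (-1)^n := by
  induction n with
  | zero => simp [cfP, cfQ]
  | succ m ih =>
    show cfP θ (m+2) * cfQ θ (m+1) - cfP θ (m+1) * cfQ θ (m+2) = _
    simp only [cfP, cfQ]
    linear_combination (-1 : ℤ) * ih

noncomputable def cfE (θ : ℝ) (n : ℕ) : ℝ := (-1)^n * (cfQ θ n * θ - cfP θ n)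

lemma cfE_succ (hθ : Irrational θ) (h01 : θ ∈ Set.Ioo (0:ℝ) 1) (n : ℕ) :
    cfE θ (n+1) = cfTheta θ (n+1) * cfE θ n := by
  induction n with
  | zero =>
    have hθ0 : θ ≠ 0 := ne_of_gt h01.1
    have ht := cfTheta_succ_eq (θ := θ) 0
    simp only [cfE, cfQ, cfP, cfTheta] at *
    rw [ht]
    push_cast
    field_simp
    ring
  | succ m ih =>
    obtain ⟨-, ht0, -⟩ := cfTheta_prop hθ h01 (m+1)
    have htne : cfTheta θ (m+1) ≠ 0 := ne_of_gt ht0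
    have ht : cfTheta θ (m+2) = 1 / cfTheta θ (m+1) - (cfA θ (m+2) : ℝ) :=
      cfTheta_succ_eq (m+1)
    have h2 : cfTheta θ (m+2) * cfTheta θ (m+1) = 1 - (cfA θ (m+2) : ℝ) * cfTheta θ (m+1) := by
      rw [ht]; field_simp
    show cfE θ (m+2) = cfTheta θ (m+2) * cfE θ (m+1)
    simp only [cfE, cfQ, cfP] at *
    push_cast
    linear_combination (-(cfA θ (m+2) : ℝ) - cfTheta θ (m+2)) * ih
      - ((-1:ℝ)^m * ((cfQ θ m : ℝ) * θ - cfP θ m)) * h2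

lemma cfE_pos (hθ : Irrational θ) (h01 : θ ∈ Set.Ioo (0:ℝ) 1) (n : ℕ) :
    0 < cfE θ n := by
  induction n with
  | zero => simpa [cfE, cfQ, cfP] using h01.1
  | succ m ih =>
    rw [cfE_succ hθ h01]
    exact mul_pos (cfTheta_prop hθ h01 (m+1)).2.1 ih

lemma neg_one_sq_pow (n : ℕ) : ((-1:ℝ))^n * (-1)^n = 1 := by
  rw [← pow_add, ← two_mul, pow_mul]
  norm_num

lemma cfD_eq (n : ℕ) : (cfQ θ n : ℝ) * θ - cfP θ n = (-1)^n * cfE θ n := by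
  simp only [cfE]
  linear_combination (-((cfQ θ n : ℝ) * θ - cfP θ n)) * neg_one_sq_pow n

lemma cfIdentity (n : ℕ) :
    (cfQ θ (n+1) : ℝ) * cfE θ n + (cfQ θ n : ℝ) * cfE θ (n+1) = 1 := by
  have hdet := cfDet (θ := θ) n
  have hdet' : (cfP θ (n+1) : ℝ) * cfQ θ n - cfP θ n * cfQ θ (n+1) = (-1)^n := by
    exact_mod_cast congrArg (fun z : ℤ => (z : ℝ)) hdet
  simp only [cfE]
  linear_combination ((-1:ℝ)^n) * hdet' + neg_one_sq_pow n

lemma cfE_lt_half (hθ : Irrational θ) (h01 : θ ∈ Set.Ioo (0:ℝ) 1) (n : ℕ)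
    (hq : 2 ≤ cfQ θ (n+1)) : cfE θ n < 1/2 := by
  have hid := cfIdentity (θ := θ) n
  have h0 := cfE_pos hθ h01 n
  have h1 := cfE_pos hθ h01 (n+1)
  have hq0 : (1:ℝ) ≤ cfQ θ n := by exact_mod_cast cfQ_one_le hθ h01 n
  have hq1 : (2:ℝ) ≤ cfQ θ (n+1) := by exact_mod_cast hq
  nlinarith

end aux

lemma neg_one_sq_pow_int (n : ℕ) : ((-1:ℤ))^n * (-1)^n = 1 := by
  rw [← pow_add, ← two_mul, pow_mul]
  norm_num

lemma cfBest (hθ : Irrational θ) (h01 : θ ∈ Set.Ioo (0:ℝ) 1) (n : ℕ) (r s : ℤ)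
    (hr1 : 1 ≤ r) (hr2 : r ≤ cfQ θ (n+1) - 1) (hrq : r ≠ cfQ θ n) :
    cfE θ n < |(r:ℝ) * θ - s| := by
  have hdet := cfDet (θ := θ) n
  have h1 := neg_one_sq_pow_int n
  set P0 := cfP θ n with hP0
  set P1 := cfP θ (n+1) with hP1
  set Q0 := cfQ θ n with hQ0
  set Q1 := cfQ θ (n+1) with hQ1
  set x : ℤ := (-1)^n * (r*P1 - s*Q1) with hx
  set y : ℤ := (-1)^n * (s*Q0 - r*P0) with hy
  have hxq : x*Q0 + y*Q1 = r := by
    linear_combination ((-1:ℤ)^n * r) * hdet + (r:ℤ) * h1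
  have hxp : x*P0 + y*P1 = s := by
    linear_combination ((-1:ℤ)^n * s) * hdet + (s:ℤ) * h1
  have hE0 := cfE_pos hθ h01 n
  have hE1 := cfE_pos hθ h01 (n+1)
  have hDn : (Q0:ℝ)*θ - P0 = (-1)^n * cfE θ n := cfD_eq n
  have hDn1 : (Q1:ℝ)*θ - P1 = (-1)^(n+1) * cfE θ (n+1) := cfD_eq (n+1)
  have c1 : (x:ℝ)*Q0 + (y:ℝ)*Q1 = r := by exact_mod_cast congrArg (fun z : ℤ => (z:ℝ)) hxq
  have c2 : (x:ℝ)*P0 + (y:ℝ)*P1 = s := by exact_mod_cast congrArg (fun z : ℤ => (z:ℝ)) hxp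
  have hmain : (r:ℝ)*θ - s = (-1)^n * ((x:ℝ) * cfE θ n - (y:ℝ) * cfE θ (n+1)) := by
    linear_combination (-θ) * c1 + c2 + (x:ℝ) * hDn + (y:ℝ) * hDn1
  have hq0 : 1 ≤ Q0 := cfQ_one_le hθ h01 n
  have hq1 : 1 ≤ Q1 := cfQ_one_le hθ h01 (n+1)
  rcases eq_or_ne y 0 with hy0 | hy0
  · have hxr : x * Q0 = r := by rw [hy0] at hxq; linarith
    have hx1 : 1 ≤ x := by
      by_contra h
      push_neg at h
      have : x * Q0 ≤ 0 := mul_nonpos_of_nonpos_of_nonneg (by linarith) (by linarith)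
      linarith
    have hx2 : 2 ≤ x := by
      rcases eq_or_lt_of_le hx1 with h | h
      · exfalso; apply hrq; rw [← hxr, ← h, one_mul]
      · linarith
    have hxr2 : (2:ℝ) ≤ (x:ℝ) := by exact_mod_cast hx2
    have hyr : (y:ℝ) = 0 := by exact_mod_cast hy0
    calc cfE θ n < (x:ℝ) * cfE θ n - (y:ℝ) * cfE θ (n+1) := by rw [hyr]; nlinarith
      _ ≤ |(x:ℝ) * cfE θ n - (y:ℝ) * cfE θ (n+1)| := le_abs_self _
      _ = |(r:ℝ)*θ - s| := by
          rw [hmain, abs_mul, abs_pow, abs_neg, abs_one, one_pow, one_mul]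
  rcases eq_or_ne x 0 with hx0 | hx0
  · exfalso
    have hyr : y * Q1 = r := by rw [hx0] at hxq; linarith
    have hy1 : 1 ≤ y := by
      by_contra h
      push_neg at h
      have : y * Q1 ≤ 0 := mul_nonpos_of_nonpos_of_nonneg (by linarith) (by linarith)
      linarith
    nlinarith
  rcases lt_or_gt_of_ne hx0 with hxneg | hxpos
  · -- x ≤ -1, show y ≥ 1
    have hx1 : x ≤ -1 := by linarith
    have hy1 : 1 ≤ y := by
      by_contra h
      push_neg at h
      have hym : y ≤ -1 := by omega
      nlinarith
    have hxr : (x:ℝ) ≤ -1 := by exact_mod_cast hx1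
    have hyr : (1:ℝ) ≤ (y:ℝ) := by exact_mod_cast hy1
    calc cfE θ n < -((x:ℝ) * cfE θ n - (y:ℝ) * cfE θ (n+1)) := by nlinarith
      _ ≤ |(x:ℝ) * cfE θ n - (y:ℝ) * cfE θ (n+1)| := neg_le_abs _
      _ = |(r:ℝ)*θ - s| := by
          rw [hmain, abs_mul, abs_pow, abs_neg, abs_one, one_pow, one_mul]
  · -- x ≥ 1, show y ≤ -1
    have hx1 : 1 ≤ x := by linarith
    have hy1 : y ≤ -1 := by
      by_contra h
      push_neg at h
      have hym : 1 ≤ y := by omega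
      nlinarith
    have hxr : (1:ℝ) ≤ (x:ℝ) := by exact_mod_cast hx1
    have hyr : (y:ℝ) ≤ -1 := by exact_mod_cast hy1
    calc cfE θ n < (x:ℝ) * cfE θ n - (y:ℝ) * cfE θ (n+1) := by nlinarith
      _ ≤ |(x:ℝ) * cfE θ n - (y:ℝ) * cfE θ (n+1)| := le_abs_self _
      _ = |(r:ℝ)*θ - s| := by
          rw [hmain, abs_mul, abs_pow, abs_neg, abs_one, one_pow, one_mul]

/-- For `θ ∈ (0,1)` irrational with convergents `pₙ/qₙ`, any `n ≥ 0` and any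
integer `r` with `1 ≤ r ≤ q_{n+1} - 1`, one has `⌊(qₙ + r)θ⌋ = pₙ + ⌊rθ⌋`. -/
theorem floor_qn_add (θ : ℝ) (hθ : Irrational θ) (hθ01 : θ ∈ Set.Ioo (0:ℝ) 1)
    (n : ℕ) (r : ℤ) (hr1 : 1 ≤ r) (hr2 : r ≤ cfQ θ (n + 1) - 1) :
    ⌊((cfQ θ n + r : ℤ) : ℝ) * θ⌋ = cfP θ n + ⌊(r : ℝ) * θ⌋ := by
  have hq2 : 2 ≤ cfQ θ (n+1) := by linarith
  have hEh := cfE_lt_half hθ hθ01 n hq2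
  have hE0 := cfE_pos hθ hθ01 n
  have hDn : (cfQ θ n : ℝ) * θ - cfP θ n = (-1)^n * cfE θ n := cfD_eq n
  set E := cfE θ n with hE
  set F := Int.fract ((r:ℝ) * θ) with hF
  have hF0 : 0 ≤ F := Int.fract_nonneg _
  have hFlt : F < 1 := Int.fract_lt_one _
  have hFd : ((⌊(r:ℝ)*θ⌋ : ℤ) : ℝ) + F = (r:ℝ)*θ := Int.floor_add_fract _
  have key : 0 ≤ (-1:ℝ)^n * E + F ∧ (-1:ℝ)^n * E + F < 1 := by
    rcases eq_or_ne r (cfQ θ n) with hreq | hrne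
    · have hrθ : (r:ℝ)*θ = ((cfP θ n : ℤ) : ℝ) + (-1)^n * E := by
        rw [hreq]; linarith [hDn]
      have hF' : F = Int.fract ((-1:ℝ)^n * E) := by
        rw [hF, hrθ, Int.fract_intCast_add]
      rcases Nat.even_or_odd n with he | ho
      · have h1 : ((-1:ℝ))^n = 1 := he.neg_one_pow
        rw [h1, one_mul] at hF' ⊢
        have hfE : Int.fract E = E := Int.fract_eq_self.2 ⟨le_of_lt hE0, by linarith⟩
        rw [hF', hfE]
        constructor <;> linarith
      · have h1 : ((-1:ℝ))^n = -1 := ho.neg_one_pow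
        rw [h1] at hF' ⊢
        have hfE : Int.fract E = E := Int.fract_eq_self.2 ⟨le_of_lt hE0, by linarith⟩
        have hfneg : Int.fract (-1 * E) = 1 - E := by
          rw [neg_one_mul, Int.fract_neg (by rw [hfE]; exact ne_of_gt hE0), hfE]
        rw [hF', hfneg]
        constructor <;> linarith
    · have hb1 := cfBest hθ hθ01 n r ⌊(r:ℝ)*θ⌋ hr1 hr2 hrne
      have hb2 := cfBest hθ hθ01 n r (⌊(r:ℝ)*θ⌋ + 1) hr1 hr2 hrne
      have e1 : |(r:ℝ)*θ - ((⌊(r:ℝ)*θ⌋ : ℤ) : ℝ)| = F := by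
        rw [abs_of_nonneg (by linarith)]; linarith
      have e2 : |(r:ℝ)*θ - (((⌊(r:ℝ)*θ⌋ + 1 : ℤ)) : ℝ)| = 1 - F := by
        push_cast
        rw [abs_of_nonpos (by linarith)]; linarith
      rw [e1] at hb1
      rw [e2] at hb2
      have hEb : |(-1:ℝ)^n * E| = E := by
        rw [abs_mul, abs_pow, abs_neg, abs_one, one_pow, one_mul, abs_of_pos hE0]
      have hEb' := abs_le.1 (le_of_eq hEb)
      constructor <;> [linarith [hEb'.1]; linarith [hEb'.2]]
  rw [Int.floor_eq_iff]
  have hexp : ((cfQ θ n : ℝ) + (r:ℝ)) * θ = (cfQ θ n : ℝ) * θ + (r:ℝ) * θ := by ring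
  constructor
  · push_cast
    rw [hexp]
    linarith [key.1]
  · push_cast
    rw [hexp]
    linarith [key.2]
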